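/- If priorities pri_1,…,pri_n are i.i.d. uniform on [0,1], then for any fixed item x ∈ [n], the expected depth of x in the random treap equals Σ_{y=1}^{n} 1/(|x−y|+1), which is Θ(log n). -/

import Mathlib

open MeasureTheory
open Set

noncomputable def unif : Measure ℝ := volume.restrict (Set.Icc (0:ℝ) 1)

instance : IsProbabilityMeasure unif := by
  constructor
  rw [unif, Measure.restrict_apply_univ, Real.volume_Icc]
  norm_num

lemma key (m : ℕ) (S : Finset (Fin (m+1))) (y : Fin (m+1)) (hy : y ∈ S) :
    (Measure.pi fun _ : Fin (m+1) => volume.restrict (Set.Icc (0:ℝ) 1))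
      {f : Fin (m+1) → ℝ | ∀ z ∈ S, f z ≤ f y}
    = ENNReal.ofReal (1 / S.card) := by
  set ν : Measure ℝ := volume.restrict (Set.Icc (0:ℝ) 1) with hν
  have hprob : IsProbabilityMeasure ν := by
    constructor; rw [hν, Measure.restrict_apply_univ, Real.volume_Icc]; norm_num
  set c := (S.erase y).card with hc
  have hcard : S.card = c + 1 := by
    rw [hc, Finset.card_erase_of_mem hy]
    have : 1 ≤ S.card := Finset.card_pos.2 ⟨y, hy⟩
    omega
  set B : Set (ℝ × (Fin m → ℝ)) :=
    {p | ∀ j : Fin m, y.succAbove j ∈ S → p.2 j ≤ p.1} with hB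
  have hBmeas : MeasurableSet B := by
    have : B = ⋂ j : Fin m, {p : ℝ × (Fin m → ℝ) | y.succAbove j ∈ S → p.2 j ≤ p.1} := by
      ext p; simp [hB]
    rw [this]
    refine MeasurableSet.iInter fun j => ?_
    by_cases h : y.succAbove j ∈ S
    · simp only [h, forall_true_left]
      exact measurableSet_le (by fun_prop) (by fun_prop)
    · simp [h]
  have hpre : {f : Fin (m+1) → ℝ | ∀ z ∈ S, f z ≤ f y}
      = (MeasurableEquiv.piFinSuccAbove (fun _ => ℝ) y) ⁻¹' B := by
    ext f
    simp only [Set.mem_preimage, Set.mem_setOf_eq, hB,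
      MeasurableEquiv.piFinSuccAbove_apply, Fin.insertNthEquiv_symm_apply, Fin.removeNth]
    constructor
    · intro h j hj; exact h _ hj
    · intro h z hz
      rcases eq_or_ne z y with rfl | hzy
      · exact le_refl _
      · obtain ⟨j, rfl⟩ := Fin.exists_succAbove_eq hzy
        exact h j hz
  rw [hpre, ((measurePreserving_piFinSuccAbove (fun _ : Fin (m+1) => ν) y)).measure_preimage
    hBmeas.nullMeasurableSet]
  rw [Measure.prod_apply hBmeas]
  have hslice : ∀ t : ℝ, (Prod.mk t ⁻¹' B)
      = Set.pi Set.univ (fun j => if y.succAbove j ∈ S then Set.Iic t else Set.univ) := by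
    intro t
    ext h
    simp only [Set.mem_preimage, hB, Set.mem_setOf_eq, Set.mem_univ_pi]
    refine forall_congr' fun j => ?_
    by_cases hj : y.succAbove j ∈ S <;> simp [hj]
  have hinner : ∀ t : ℝ, (Measure.pi fun _ : Fin m => ν) (Prod.mk t ⁻¹' B)
      = ν (Set.Iic t) ^ c := by
    intro t
    rw [hslice t, Measure.pi_pi]
    have : ∀ j : Fin m, ν (if y.succAbove j ∈ S then Set.Iic t else Set.univ)
        = if y.succAbove j ∈ S then ν (Set.Iic t) else 1 := by
      intro j; split <;> simp
    simp_rw [this]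
    rw [← Finset.prod_filter, Finset.prod_const]
    congr 1
    rw [hc]
    apply Finset.card_bij (fun j _ => y.succAbove j)
    · intro j hj
      simp only [Finset.mem_filter, Finset.mem_univ, true_and] at hj
      exact Finset.mem_erase.2 ⟨Fin.succAbove_ne y j, hj⟩
    · intro j₁ _ j₂ _ hj
      exact Fin.succAbove_right_injective hj
    · intro z hz
      obtain ⟨hz1, hz2⟩ := Finset.mem_erase.1 hz
      obtain ⟨j, rfl⟩ := Fin.exists_succAbove_eq hz1
      exact ⟨j, by simpa using hz2, rfl⟩
  simp_rw [hinner]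
  have h1 : ∫⁻ t, ν (Set.Iic t) ^ c ∂ν
      = ∫⁻ t in Set.Icc (0:ℝ) 1, ENNReal.ofReal (t ^ c) ∂volume := by
    rw [hν]
    apply setLIntegral_congr_fun measurableSet_Icc
    intro t ht
    dsimp only
    rw [Measure.restrict_apply measurableSet_Iic]
    have : Set.Iic t ∩ Set.Icc (0:ℝ) 1 = Set.Icc 0 t := by
      ext u
      simp only [Set.mem_inter_iff, Set.mem_Iic, Set.mem_Icc]
      obtain ⟨ht0, ht1⟩ := ht
      constructor
      · rintro ⟨h1, h2, h3⟩; exact ⟨h2, h1⟩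
      · rintro ⟨h1, h2⟩; exact ⟨h2, h1, h2.trans ht1⟩
    rw [this, Real.volume_Icc, sub_zero, ← ENNReal.ofReal_pow ht.1]
  rw [h1]
  have h2 : ∫⁻ t in Set.Icc (0:ℝ) 1, ENNReal.ofReal (t ^ c) ∂volume
      = ENNReal.ofReal (∫ t in Set.Icc (0:ℝ) 1, t ^ c ∂volume) := by
    rw [ofReal_integral_eq_lintegral_ofReal]
    · exact (continuous_pow c).integrableOn_Icc
    · filter_upwards [ae_restrict_mem measurableSet_Icc] with t ht
      exact pow_nonneg ht.1 c
  rw [h2]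
  have h3 : ∫ t in Set.Icc (0:ℝ) 1, t ^ c ∂volume = 1 / (c + 1) := by
    rw [MeasureTheory.integral_Icc_eq_integral_Ioc,
      ← intervalIntegral.integral_of_le (zero_le_one), integral_pow]
    norm_num
  rw [h3, hcard]
  push_cast
  ring_nf

lemma harmonic_lb (m : ℕ) :
    Real.log (m + 1) ≤ ∑ i ∈ Finset.range m, 1 / ((i : ℝ) + 1) := by
  induction m with
  | zero => simp
  | succ m ih =>
    rw [Finset.sum_range_succ]
    have hpos : (0:ℝ) < (m:ℝ) + 1 := by positivity
    have h := Real.log_le_sub_one_of_pos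
      (show (0:ℝ) < ((m:ℝ) + 2) / ((m:ℝ) + 1) by positivity)
    rw [Real.log_div (by positivity) (by positivity)] at h
    have h2 : ((m:ℝ) + 2) / ((m:ℝ) + 1) - 1 = 1 / ((m:ℝ) + 1) := by
      field_simp
      norm_num
    rw [h2] at h
    push_cast
    have e1 : ((m:ℝ) + 1 + 1) = (m:ℝ) + 2 := by ring
    rw [e1]
    linarith

lemma harmonic_ub : ∀ m : ℕ, 1 ≤ m →
    ∑ i ∈ Finset.range m, 1 / ((i : ℝ) + 1) ≤ 1 + Real.log m := by
  refine Nat.le_induction ?_ ?_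
  · norm_num
  · intro m hm ih
    rw [Finset.sum_range_succ]
    have hm1 : (1:ℝ) ≤ (m:ℝ) := by exact_mod_cast hm
    have hpos : (0:ℝ) < (m:ℝ) := by linarith
    have h := Real.log_le_sub_one_of_pos
      (show (0:ℝ) < (m:ℝ) / ((m:ℝ) + 1) by positivity)
    rw [Real.log_div (by positivity) (by positivity)] at h
    have h2 : (m:ℝ) / ((m:ℝ) + 1) - 1 = - (1 / ((m:ℝ) + 1)) := by
      field_simp
      ring
    rw [h2] at h
    push_cast
    linarith

lemma sum_inj_le (n : ℕ) (s : Finset (Fin n)) (e : Fin n → ℕ)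
    (hinj : ∀ y₁ ∈ s, ∀ y₂ ∈ s, e y₁ = e y₂ → y₁ = y₂) (hmem : ∀ y ∈ s, e y < n) :
    ∑ y ∈ s, 1 / ((e y : ℝ) + 1) ≤ ∑ i ∈ Finset.range n, 1 / ((i : ℝ) + 1) := by
  rw [← Finset.sum_image (g := e) (f := fun i : ℕ => 1 / ((i : ℝ) + 1)) hinj]
  apply Finset.sum_le_sum_of_subset_of_nonneg
  · intro i hi
    obtain ⟨y, hy, rfl⟩ := Finset.mem_image.1 hi
    exact Finset.mem_range.2 (hmem y hy)
  · intro i _ _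
    positivity

lemma sum_ge_hm (n m : ℕ) (x : Fin n) (e : ℕ → Fin n)
    (hinj : ∀ i₁ ∈ Finset.range m, ∀ i₂ ∈ Finset.range m, e i₁ = e i₂ → i₁ = i₂)
    (hd : ∀ i ∈ Finset.range m, |(x.val : ℝ) - ((e i).val : ℝ)| = i) :
    ∑ i ∈ Finset.range m, 1 / ((i : ℝ) + 1)
      ≤ ∑ y : Fin n, 1 / (|(x.val : ℝ) - (y.val : ℝ)| + 1) := by
  calc ∑ i ∈ Finset.range m, 1 / ((i : ℝ) + 1)
      = ∑ y ∈ (Finset.range m).image e, 1 / (|(x.val : ℝ) - (y.val : ℝ)| + 1) := by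
        rw [Finset.sum_image hinj]
        exact (Finset.sum_congr rfl fun i hi => by rw [hd i hi]).symm
    _ ≤ _ := Finset.sum_le_sum_of_subset_of_nonneg (Finset.subset_univ _)
        (fun _ _ _ => by positivity)

lemma T_lb (n : ℕ) (hn : 2 ≤ n) (x : Fin n) :
    (1/2 : ℝ) * Real.log n ≤ ∑ y : Fin n, 1 / (|(x.val : ℝ) - (y.val : ℝ)| + 1) := by
  have hx : x.val < n := x.isLt
  -- choose the longer side
  obtain ⟨m, hm2, hkey⟩ : ∃ m : ℕ, n + 1 ≤ 2 * m ∧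
      ∑ i ∈ Finset.range m, 1 / ((i : ℝ) + 1)
        ≤ ∑ y : Fin n, 1 / (|(x.val : ℝ) - (y.val : ℝ)| + 1) := by
    by_cases h : n - x.val ≤ x.val + 1
    · have hc1 : n + 1 ≤ 2 * (x.val + 1) := by omega
      refine ⟨x.val + 1, hc1, sum_ge_hm n (x.val + 1) x
        (fun i => ⟨x.val - i, by omega⟩) ?_ ?_⟩
      · intro i₁ hi₁ i₂ hi₂ he
        simp only [Finset.mem_range] at hi₁ hi₂
        have h' : x.val - i₁ = x.val - i₂ := congrArg Fin.val he
        omega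
      · intro i hi
        simp only [Finset.mem_range] at hi
        have hle : i ≤ x.val := by omega
        rw [show (((⟨x.val - i, by omega⟩ : Fin n) : Fin n).val : ℝ) = ((x.val - i : ℕ) : ℝ) from rfl,
          Nat.cast_sub hle]
        rw [show (x.val : ℝ) - ((x.val : ℝ) - (i : ℝ)) = (i : ℝ) by ring,
          abs_of_nonneg (Nat.cast_nonneg i)]
    · have hc1 : n + 1 ≤ 2 * (n - x.val) := by omega
      have hn0 : 0 < n := by omega
      refine ⟨n - x.val, hc1, sum_ge_hm n (n - x.val) x
        (fun i => ⟨(x.val + i) % n, Nat.mod_lt _ hn0⟩) ?_ ?_⟩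
      · intro i₁ hi₁ i₂ hi₂ he
        simp only [Finset.mem_range] at hi₁ hi₂
        have h' : (x.val + i₁) % n = (x.val + i₂) % n := congrArg Fin.val he
        rw [Nat.mod_eq_of_lt (by omega), Nat.mod_eq_of_lt (by omega)] at h'
        omega
      · intro i hi
        simp only [Finset.mem_range] at hi
        rw [show (((⟨(x.val + i) % n, Nat.mod_lt _ hn0⟩ : Fin n)).val : ℝ)
            = (((x.val + i) % n : ℕ) : ℝ) from rfl, Nat.mod_eq_of_lt (by omega)]
        push_cast
        rw [abs_of_nonpos (by linarith [Nat.cast_nonneg (α := ℝ) i])]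
        ring
  refine le_trans ?_ (le_trans (harmonic_lb m) hkey)
  have hsq : (n : ℝ) ≤ ((m : ℝ) + 1) ^ 2 := by
    have : n ≤ (m + 1) ^ 2 := by nlinarith
    exact_mod_cast this
  have hlog : Real.log n ≤ Real.log (((m : ℝ) + 1) ^ 2) :=
    Real.log_le_log (by positivity) hsq
  rw [Real.log_pow] at hlog
  push_cast at hlog ⊢
  linarith

lemma T_ub (n : ℕ) (hn : 2 ≤ n) (x : Fin n) :
    ∑ y : Fin n, 1 / (|(x.val : ℝ) - (y.val : ℝ)| + 1) ≤ 2 * (1 + Real.log n) := by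
  have hH := harmonic_ub n (by omega)
  rw [← Finset.sum_filter_add_sum_filter_not Finset.univ (fun y : Fin n => y.val ≤ x.val)]
  have h1 : ∑ y ∈ Finset.univ.filter (fun y : Fin n => y.val ≤ x.val),
      1 / (|(x.val : ℝ) - (y.val : ℝ)| + 1)
      ≤ ∑ i ∈ Finset.range n, 1 / ((i : ℝ) + 1) := by
    have := sum_inj_le n (Finset.univ.filter (fun y : Fin n => y.val ≤ x.val))
      (fun y => x.val - y.val) ?_ ?_
    · refine le_trans (le_of_eq (Finset.sum_congr rfl fun y hy => ?_)) this
      simp only [Finset.mem_filter] at hy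
      rw [Nat.cast_sub hy.2, abs_of_nonneg]
      have : (y.val : ℝ) ≤ x.val := by exact_mod_cast hy.2
      linarith
    · intro y₁ hy₁ y₂ hy₂ he
      simp only [Finset.mem_filter] at hy₁ hy₂
      have he' : x.val - y₁.val = x.val - y₂.val := he
      exact Fin.ext (by omega)
    · intro y hy
      have hx : x.val < n := x.isLt
      show x.val - y.val < n
      omega
  have h2 : ∑ y ∈ Finset.univ.filter (fun y : Fin n => ¬ y.val ≤ x.val),
      1 / (|(x.val : ℝ) - (y.val : ℝ)| + 1)
      ≤ ∑ i ∈ Finset.range n, 1 / ((i : ℝ) + 1) := by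
    have := sum_inj_le n (Finset.univ.filter (fun y : Fin n => ¬ y.val ≤ x.val))
      (fun y => y.val - x.val) ?_ ?_
    · refine le_trans (le_of_eq (Finset.sum_congr rfl fun y hy => ?_)) this
      simp only [Finset.mem_filter] at hy
      have hlt : x.val ≤ y.val := by omega
      rw [Nat.cast_sub hlt, abs_of_nonpos]
      · ring_nf
      have : (x.val : ℝ) ≤ y.val := by exact_mod_cast hlt
      linarith
    · intro y₁ hy₁ y₂ hy₂ he
      simp only [Finset.mem_filter] at hy₁ hy₂
      have he' : y₁.val - x.val = y₂.val - x.val := he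
      exact Fin.ext (by omega)
    · intro y hy
      have hy' : y.val < n := y.isLt
      show y.val - x.val < n
      omega
  linarith

/-- The depth (number of ancestors, including the node itself) of item `x` in the treap
over `Fin n` determined by priorities `pri`: `y` is an ancestor of `x` (or `x` itself)
iff `pri y` is maximal on the interval of items between `x` and `y`. -/
noncomputable def treapDepth (n : ℕ) (pri : Fin n → ℝ) (x : Fin n) : ℕ :=
  (Finset.univ.filter fun y : Fin n =>
    ∀ z : Fin n, min x y ≤ z → z ≤ max x y → pri z ≤ pri y).card

/-- If the priorities are i.i.d. uniform on `[0,1]`, the expected depth of any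
fixed item `x` equals `∑_{y=1}^{n} 1/(|x−y|+1)`, and this quantity is `Θ(log n)`. -/
theorem stmt1 : ∃ c₁ c₂ : ℝ, 0 < c₁ ∧ 0 < c₂ ∧
    ∀ n : ℕ, 2 ≤ n → ∀ x : Fin n,
      ((∫ pri : Fin n → ℝ, (treapDepth n pri x : ℝ)
          ∂(Measure.pi fun _ : Fin n => volume.restrict (Set.Icc (0 : ℝ) 1)))
        = ∑ y : Fin n, 1 / (|(x.val : ℝ) - (y.val : ℝ)| + 1))
      ∧ c₁ * Real.log n ≤ ∑ y : Fin n, 1 / (|(x.val : ℝ) - (y.val : ℝ)| + 1)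
      ∧ (∑ y : Fin n, 1 / (|(x.val : ℝ) - (y.val : ℝ)| + 1)) ≤ c₂ * Real.log n := by
  have hlog2 : (0:ℝ) < Real.log 2 := Real.log_pos (by norm_num)
  refine ⟨1/2, 2 / Real.log 2 + 2, by norm_num, by positivity, ?_⟩
  intro n hn x
  obtain ⟨m, rfl⟩ : ∃ m, n = m + 1 := ⟨n - 1, by omega⟩
  refine ⟨?_, T_lb (m+1) hn x, ?_⟩
  · haveI : IsProbabilityMeasure (volume.restrict (Set.Icc (0:ℝ) 1)) := by
      constructor; rw [Measure.restrict_apply_univ, Real.volume_Icc]; norm_num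
    have hmeasE : ∀ y : Fin (m+1), MeasurableSet
        {f : Fin (m+1) → ℝ | ∀ z, min x y ≤ z → z ≤ max x y → f z ≤ f y} := by
      intro y
      have : {f : Fin (m+1) → ℝ | ∀ z, min x y ≤ z → z ≤ max x y → f z ≤ f y}
          = ⋂ z : Fin (m+1),
            {f : Fin (m+1) → ℝ | min x y ≤ z → z ≤ max x y → f z ≤ f y} := by
        ext f; simp
      rw [this]
      refine MeasurableSet.iInter fun z => ?_
      by_cases h1 : min x y ≤ z
      · by_cases h2 : z ≤ max x y
        · simp only [h1, h2, forall_true_left]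
          exact measurableSet_le (measurable_pi_apply z) (measurable_pi_apply y)
        · simp [h2]
      · simp [h1]
    have hint : ∀ pri : Fin (m+1) → ℝ, ((treapDepth (m+1) pri x : ℝ))
        = ∑ y : Fin (m+1), Set.indicator
            {f : Fin (m+1) → ℝ | ∀ z, min x y ≤ z → z ≤ max x y → f z ≤ f y}
            (fun _ => (1:ℝ)) pri := by
      intro pri
      rw [treapDepth, Finset.natCast_card_filter]
      refine Finset.sum_congr rfl fun y _ => ?_
      rw [Set.indicator_apply]
      by_cases h : ∀ z, min x y ≤ z → z ≤ max x y → pri z ≤ pri y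
      · simp [h]
      · simp [h]
    simp_rw [hint]
    rw [integral_finset_sum _ (fun y _ => ((integrable_const (1:ℝ)).indicator (hmeasE y)))]
    refine Finset.sum_congr rfl fun y _ => ?_
    have : ∫ pri : Fin (m+1) → ℝ, Set.indicator
        {f : Fin (m+1) → ℝ | ∀ z, min x y ≤ z → z ≤ max x y → f z ≤ f y}
        (fun _ => (1:ℝ)) pri
        ∂(Measure.pi fun _ : Fin (m+1) => volume.restrict (Set.Icc (0 : ℝ) 1))
        = ((Measure.pi fun _ : Fin (m+1) => volume.restrict (Set.Icc (0 : ℝ) 1))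
            {f : Fin (m+1) → ℝ | ∀ z, min x y ≤ z → z ≤ max x y → f z ≤ f y}).toReal := by
      exact MeasureTheory.integral_indicator_one (hmeasE y)
    rw [this]
    have hE : {f : Fin (m+1) → ℝ | ∀ z, min x y ≤ z → z ≤ max x y → f z ≤ f y}
        = {f : Fin (m+1) → ℝ | ∀ z ∈ Finset.Icc (min x y) (max x y), f z ≤ f y} := by
      ext f; simp [Finset.mem_Icc]
    rw [hE, key m (Finset.Icc (min x y) (max x y)) y
      (Finset.mem_Icc.2 ⟨min_le_right x y, le_max_right x y⟩)]
    rw [ENNReal.toReal_ofReal (by positivity)]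
    congr 1
    rw [Fin.card_Icc]
    rcases le_total x y with h | h
    · rw [min_eq_left h, max_eq_right h]
      have hv : x.val ≤ y.val := h
      rw [Nat.cast_sub (by omega)]
      push_cast
      rw [abs_sub_comm, abs_of_nonneg (sub_nonneg.2 (by exact_mod_cast hv))]
      ring
    · rw [min_eq_right h, max_eq_left h]
      have hv : y.val ≤ x.val := h
      rw [Nat.cast_sub (by omega)]
      push_cast
      rw [abs_of_nonneg (sub_nonneg.2 (by exact_mod_cast hv))]
      ring
  · have h1 := T_ub (m+1) hn x
    have hlogn : Real.log 2 ≤ Real.log ((m+1 : ℕ) : ℝ) :=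
      Real.log_le_log (by norm_num) (by exact_mod_cast hn)
    have h2 : (2:ℝ) ≤ (2 / Real.log 2) * Real.log ((m+1 : ℕ) : ℝ) := by
      rw [div_mul_eq_mul_div, le_div_iff₀ hlog2]
      nlinarith
    have h3 : (2 / Real.log 2 + 2) * Real.log ((m+1 : ℕ) : ℝ)
        = (2 / Real.log 2) * Real.log ((m+1 : ℕ) : ℝ)
          + 2 * Real.log ((m+1 : ℕ) : ℝ) := by ring
    rw [h3]
    push_cast at h1 h2 ⊢
    linarith
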